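/- For a random subcomplex X of Δₙ, the following are equivalent: (1) X is spatially independent, i.e. P(Y₁ ∪ Y₂ ⊆ X)·P(Y₁ ∩ Y₂ ⊆ X) = P(Y₁ ⊆ X)·P(Y₂ ⊆ X) for all Y₁, Y₂ ∈ Sₙ; (2) for all Y₁, Y₂ ∈ Sₙ with P(Y₂ ⊆ X) > 0, P(Y₁ ⊆ X | Y₂ ⊆ X) = P(Y₁ ⊆ X | Y₁ ∩ Y₂ ⊆ X); (3) for all Y₁, Y₂ ∈ Sₙ with P(Y₁ ∩ Y₂ ⊆ X) > 0, P(Y₁ ∪ Y₂ ⊆ X | Y₁ ∩ Y₂ ⊆ X) = P(Y₁ ⊆ X | Y₁ ∩ Y₂ ⊆ X)·P(Y₂ ⊆ X | Y₁ ∩ Y₂ ⊆ X); (4) for all Y₁, Y₂, Z ∈ Sₙ with Y₁ ∩ Y₂ ⊆ Z and P(Z ⊆ X) > 0, P(Y₁ ∪ Y₂ ⊆ X | Z ⊆ X) = P(Y₁ ⊆ X | Z ⊆ X)·P(Y₂ ⊆ X | Z ⊆ X). -/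

import Mathlib

open MeasureTheory Finset Filter


/-- A (sub)complex of the complete complex on the vertex type `V`:
a family of finite subsets closed under taking subsets and containing `∅`. -/
def SComplex {V : Type*} [DecidableEq V] (Y : Finset (Finset V)) : Prop :=
  ∅ ∈ Y ∧ ∀ σ ∈ Y, ∀ τ ∈ σ.powerset, τ ∈ Y

instance {V : Type*} [DecidableEq V] :
    DecidablePred (fun Y : Finset (Finset V) => SComplex Y) :=
  fun Y => decidable_of_iff (∅ ∈ Y ∧ ∀ σ ∈ Y, ∀ τ ∈ σ.powerset, τ ∈ Y) Iff.rfl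

/-- `scount Y m` = number of simplices of `Y` with `m` vertices (i.e. `(m-1)`-simplices);
`f_k(Y) = scount Y (k+1)` and `f_{-1}(Y) = scount Y 0`. -/
def scount {V : Type*} (Y : Finset (Finset V)) (m : ℕ) : ℕ :=
  (Y.filter (fun σ => σ.card = m)).card

/-- Number of external `i`-simplices of `Y` in the complete complex on `Fin n`:
`i`-simplices `σ ∉ Y` all of whose strict subsets lie in `Y`. -/
def ecount {n : ℕ} (Y : Finset (Finset (Fin n))) (i : ℕ) : ℕ :=
  (Finset.univ.filter (fun σ : Finset (Fin n) =>
    σ.card = i + 1 ∧ σ ∉ Y ∧ ∀ τ ∈ σ.powerset, τ ≠ σ → τ ∈ Y)).card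

/-- The weight `∏_{i=0}^{n-1} p_i^{f_i(Y)} (1-p_i)^{e_i(Y)}` of the
multi-parameter random simplicial complex model. -/
noncomputable def mpWeight {n : ℕ} (p : Fin n → ℝ) (Y : Finset (Finset (Fin n))) : ℝ :=
  ∏ i : Fin n, p i ^ scount Y (i.1 + 1) * (1 - p i) ^ ecount Y i.1

/-- The probability of an event, as a real number. -/
noncomputable def prb {Ω : Type*} [MeasurableSpace Ω] (μ : Measure Ω) (A : Set Ω) : ℝ :=
  (μ A).toReal

/-- Conditional probability `P(A | B)`, as a real number. -/
noncomputable def condP {Ω : Type*} [MeasurableSpace Ω] (μ : Measure Ω) (A B : Set Ω) : ℝ :=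
  prb μ (A ∩ B) / prb μ B

/-- A random subcomplex is homogeneous if its distribution is invariant under
every permutation of the vertices. -/
def Homogeneous {n : ℕ} {Ω : Type*} [MeasurableSpace Ω] (μ : Measure Ω)
    (X : Ω → Finset (Finset (Fin n))) : Prop :=
  ∀ (g : Equiv.Perm (Fin n)) (Y : Finset (Finset (Fin n))),
    prb μ {ω | Finset.image (fun σ => σ.image (⇑g)) (X ω) = Y} = prb μ {ω | X ω = Y}

/-- Spatial independence of a random subcomplex. -/
def SpatInd {n : ℕ} {Ω : Type*} [MeasurableSpace Ω] (μ : Measure Ω)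
    (X : Ω → Finset (Finset (Fin n))) : Prop :=
  ∀ Y₁ Y₂ : Finset (Finset (Fin n)), SComplex Y₁ → SComplex Y₂ →
    prb μ {ω | Y₁ ∪ Y₂ ⊆ X ω} * prb μ {ω | Y₁ ∩ Y₂ ⊆ X ω} =
      prb μ {ω | Y₁ ⊆ X ω} * prb μ {ω | Y₂ ⊆ X ω}

/-- The `k`-dimensional standard simplex `{0, 1, …, k}` in `Fin n`
(for `k = -1` this is the empty simplex). -/
def stdSimp (n : ℕ) (k : ℤ) : Finset (Fin n) :=
  Finset.univ.filter (fun v => (v : ℤ) ≤ k)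

/-- The `k`-dimensional simplex `{1, 2, …, k+1}` in `Fin n`,
sharing `k` vertices with `stdSimp n k`. -/
def stdSimp' (n : ℕ) (k : ℕ) : Finset (Fin n) :=
  Finset.univ.filter (fun v => 1 ≤ (v : ℕ) ∧ (v : ℕ) ≤ k + 1)

/-- The parameter `q_k = P(τ ∈ X)` for a `k`-simplex `τ` (with `q_{-1} = 1`). -/
noncomputable def qpar {n : ℕ} {Ω : Type*} [MeasurableSpace Ω] (μ : Measure Ω)
    (X : Ω → Finset (Finset (Fin n))) (k : ℤ) : ℝ :=
  if k < 0 then 1 else prb μ {ω | stdSimp n k ∈ X ω}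

/-- The parameter `r_k = P(σ ∈ X | τ ∈ X)` for a `(k+1)`-simplex `σ` containing the
`k`-simplex `τ`, if `q_k > 0`, and `0` otherwise (with `r_{-1} = q_0`). -/
noncomputable def rpar {n : ℕ} {Ω : Type*} [MeasurableSpace Ω] (μ : Measure Ω)
    (X : Ω → Finset (Finset (Fin n))) (k : ℤ) : ℝ :=
  if 0 < qpar μ X k then
    condP μ {ω | stdSimp n (k + 1) ∈ X ω} {ω | stdSimp n k ∈ X ω}
  else 0

/-- The parameter `s_k = P(τ₁ ∪ τ₂ ∈ X | τ₁ ∈ X, τ₂ ∈ X)` for `k`-simplices `τ₁, τ₂`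
sharing `k` vertices, if `P(τ₁ ∈ X, τ₂ ∈ X) > 0`, and `0` otherwise. -/
noncomputable def spar {n : ℕ} {Ω : Type*} [MeasurableSpace Ω] (μ : Measure Ω)
    (X : Ω → Finset (Finset (Fin n))) (k : ℕ) : ℝ :=
  if 0 < prb μ ({ω | stdSimp n k ∈ X ω} ∩ {ω | stdSimp' n k ∈ X ω}) then
    condP μ {ω | stdSimp n (k + 1) ∈ X ω}
      ({ω | stdSimp n k ∈ X ω} ∩ {ω | stdSimp' n k ∈ X ω})
  else 0

section AuxLemmas

variable {V : Type*} [DecidableEq V]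

lemma sComplex_union {Y₁ Y₂ : Finset (Finset V)}
    (h1 : SComplex Y₁) (h2 : SComplex Y₂) : SComplex (Y₁ ∪ Y₂) := by
  refine ⟨Finset.mem_union_left _ h1.1, ?_⟩
  intro σ hσ τ hτ
  rcases Finset.mem_union.1 hσ with h | h
  · exact Finset.mem_union_left _ (h1.2 σ h τ hτ)
  · exact Finset.mem_union_right _ (h2.2 σ h τ hτ)

lemma sComplex_inter {Y₁ Y₂ : Finset (Finset V)}
    (h1 : SComplex Y₁) (h2 : SComplex Y₂) : SComplex (Y₁ ∩ Y₂) := by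
  refine ⟨Finset.mem_inter.2 ⟨h1.1, h2.1⟩, ?_⟩
  intro σ hσ τ hτ
  rcases Finset.mem_inter.1 hσ with ⟨ha, hb⟩
  exact Finset.mem_inter.2 ⟨h1.2 σ ha τ hτ, h2.2 σ hb τ hτ⟩

variable {Ω : Type*} [MeasurableSpace Ω] (μ : Measure Ω)

lemma prb_nonneg (A : Set Ω) : 0 ≤ prb μ A := ENNReal.toReal_nonneg

lemma prb_mono [IsFiniteMeasure μ] {A B : Set Ω} (h : A ⊆ B) : prb μ A ≤ prb μ B :=
  ENNReal.toReal_mono (measure_ne_top μ B) (measure_mono h)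

lemma event_union {n : ℕ} {X : Ω → Finset (Finset (Fin n))}
    (Y₁ Y₂ : Finset (Finset (Fin n))) :
    {ω | Y₁ ∪ Y₂ ⊆ X ω} = {ω | Y₁ ⊆ X ω} ∩ {ω | Y₂ ⊆ X ω} := by
  ext ω; simp [Finset.union_subset_iff, Set.mem_inter_iff]

lemma event_mono {n : ℕ} {X : Ω → Finset (Finset (Fin n))}
    {Y₁ Y₂ : Finset (Finset (Fin n))} (h : Y₂ ⊆ Y₁) :
    {ω | Y₁ ⊆ X ω} ⊆ {ω | Y₂ ⊆ X ω} :=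
  fun _ hω => h.trans hω

end AuxLemmas

/-- four characterizations of spatial independence. -/
theorem spatiallyIndependent_tfae (n : ℕ)
    {Ω : Type*} [MeasurableSpace Ω] (μ : Measure Ω) [IsProbabilityMeasure μ]
    (X : Ω → Finset (Finset (Fin n)))
    (hmeas : ∀ Y, MeasurableSet {ω | X ω = Y})
    (hXc : ∀ ω, SComplex (X ω)) :
    List.TFAE [
      SpatInd μ X,
      ∀ Y₁ Y₂ : Finset (Finset (Fin n)), SComplex Y₁ → SComplex Y₂ →
        0 < prb μ {ω | Y₂ ⊆ X ω} →
        condP μ {ω | Y₁ ⊆ X ω} {ω | Y₂ ⊆ X ω} =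
          condP μ {ω | Y₁ ⊆ X ω} {ω | Y₁ ∩ Y₂ ⊆ X ω},
      ∀ Y₁ Y₂ : Finset (Finset (Fin n)), SComplex Y₁ → SComplex Y₂ →
        0 < prb μ {ω | Y₁ ∩ Y₂ ⊆ X ω} →
        condP μ {ω | Y₁ ∪ Y₂ ⊆ X ω} {ω | Y₁ ∩ Y₂ ⊆ X ω} =
          condP μ {ω | Y₁ ⊆ X ω} {ω | Y₁ ∩ Y₂ ⊆ X ω} *
            condP μ {ω | Y₂ ⊆ X ω} {ω | Y₁ ∩ Y₂ ⊆ X ω},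
      ∀ Y₁ Y₂ Z : Finset (Finset (Fin n)), SComplex Y₁ → SComplex Y₂ → SComplex Z →
        Y₁ ∩ Y₂ ⊆ Z → 0 < prb μ {ω | Z ⊆ X ω} →
        condP μ {ω | Y₁ ∪ Y₂ ⊆ X ω} {ω | Z ⊆ X ω} =
          condP μ {ω | Y₁ ⊆ X ω} {ω | Z ⊆ X ω} *
            condP μ {ω | Y₂ ⊆ X ω} {ω | Z ⊆ X ω}] := by
  tfae_have 1 → 2
  | h => by
    intro Y₁ Y₂ h1 h2 hb
    have key := h Y₁ Y₂ h1 h2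
    have hbv : prb μ {ω | Y₂ ⊆ X ω} ≤ prb μ {ω | Y₁ ∩ Y₂ ⊆ X ω} :=
      prb_mono μ (event_mono Finset.inter_subset_right)
    have hv : 0 < prb μ {ω | Y₁ ∩ Y₂ ⊆ X ω} := lt_of_lt_of_le hb hbv
    have eA : {ω | Y₁ ⊆ X ω} ∩ {ω | Y₁ ∩ Y₂ ⊆ X ω} = {ω | Y₁ ⊆ X ω} :=
      Set.inter_eq_left.2 (event_mono Finset.inter_subset_left)
    have eAB : {ω | Y₁ ⊆ X ω} ∩ {ω | Y₂ ⊆ X ω} = {ω | Y₁ ∪ Y₂ ⊆ X ω} :=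
      (event_union Y₁ Y₂).symm
    unfold condP
    rw [eA, eAB]
    field_simp
    linear_combination key
  tfae_have 2 → 1
  | h => by
    intro Y₁ Y₂ h1 h2
    by_cases hb : 0 < prb μ {ω | Y₂ ⊆ X ω}
    · have key := h Y₁ Y₂ h1 h2 hb
      have hbv : prb μ {ω | Y₂ ⊆ X ω} ≤ prb μ {ω | Y₁ ∩ Y₂ ⊆ X ω} :=
        prb_mono μ (event_mono Finset.inter_subset_right)
      have hv : 0 < prb μ {ω | Y₁ ∩ Y₂ ⊆ X ω} := lt_of_lt_of_le hb hbv
      have eA : {ω | Y₁ ⊆ X ω} ∩ {ω | Y₁ ∩ Y₂ ⊆ X ω} = {ω | Y₁ ⊆ X ω} :=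
        Set.inter_eq_left.2 (event_mono Finset.inter_subset_left)
      have eAB : {ω | Y₁ ⊆ X ω} ∩ {ω | Y₂ ⊆ X ω} = {ω | Y₁ ∪ Y₂ ⊆ X ω} :=
        (event_union Y₁ Y₂).symm
      unfold condP at key
      rw [eA, eAB] at key
      field_simp at key
      linear_combination key
    · have hb0 : prb μ {ω | Y₂ ⊆ X ω} = 0 :=
        le_antisymm (not_lt.1 hb) (prb_nonneg μ _)
      have hu0 : prb μ {ω | Y₁ ∪ Y₂ ⊆ X ω} = 0 := by
        have : prb μ {ω | Y₁ ∪ Y₂ ⊆ X ω} ≤ prb μ {ω | Y₂ ⊆ X ω} :=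
          prb_mono μ (event_mono Finset.subset_union_right)
        have h0 := prb_nonneg μ {ω | Y₁ ∪ Y₂ ⊆ X ω}
        linarith [this.trans_eq hb0]
      rw [hb0, hu0]; ring
  tfae_have 1 → 4
  | h => by
    intro Y₁ Y₂ Z h1 h2 hZ hsub hd
    have key := h (Y₁ ∪ Z) (Y₂ ∪ Z) (sComplex_union h1 hZ) (sComplex_union h2 hZ)
    have e1 : (Y₁ ∪ Z) ∪ (Y₂ ∪ Z) = (Y₁ ∪ Y₂) ∪ Z := by
      ext x
      simp only [Finset.mem_union]
      tauto
    have e2 : (Y₁ ∪ Z) ∩ (Y₂ ∪ Z) = Z := by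
      ext x
      simp only [Finset.mem_inter, Finset.mem_union]
      constructor
      · rintro ⟨hx1 | hx1, hx2 | hx2⟩ <;>
          first
            | assumption
            | exact hsub (Finset.mem_inter.2 ⟨hx1, hx2⟩)
      · tauto
    rw [e1, e2, event_union (Y₁ ∪ Y₂) Z, event_union Y₁ Z, event_union Y₂ Z] at key
    unfold condP
    field_simp
    linear_combination key
  tfae_have 4 → 3
  | h => fun Y₁ Y₂ h1 h2 hv =>
    h Y₁ Y₂ (Y₁ ∩ Y₂) h1 h2 (sComplex_inter h1 h2) (Finset.Subset.refl _) hv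
  tfae_have 3 → 1
  | h => by
    intro Y₁ Y₂ h1 h2
    by_cases hv : 0 < prb μ {ω | Y₁ ∩ Y₂ ⊆ X ω}
    · have key := h Y₁ Y₂ h1 h2 hv
      have eA : {ω | Y₁ ⊆ X ω} ∩ {ω | Y₁ ∩ Y₂ ⊆ X ω} = {ω | Y₁ ⊆ X ω} :=
        Set.inter_eq_left.2 (event_mono Finset.inter_subset_left)
      have eB : {ω | Y₂ ⊆ X ω} ∩ {ω | Y₁ ∩ Y₂ ⊆ X ω} = {ω | Y₂ ⊆ X ω} :=
        Set.inter_eq_left.2 (event_mono Finset.inter_subset_right)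
      have eU : {ω | Y₁ ∪ Y₂ ⊆ X ω} ∩ {ω | Y₁ ∩ Y₂ ⊆ X ω} = {ω | Y₁ ∪ Y₂ ⊆ X ω} :=
        Set.inter_eq_left.2
          (event_mono (Finset.inter_subset_left.trans Finset.subset_union_left))
      unfold condP at key
      rw [eA, eB, eU] at key
      have hv' : prb μ {ω | Y₁ ∩ Y₂ ⊆ X ω} ≠ 0 := ne_of_gt hv
      field_simp at key
      have h' : prb μ {ω | Y₁ ∪ Y₂ ⊆ X ω} * prb μ {ω | Y₁ ∩ Y₂ ⊆ X ω} *
          prb μ {ω | Y₁ ∩ Y₂ ⊆ X ω} =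
          prb μ {ω | Y₁ ⊆ X ω} * prb μ {ω | Y₂ ⊆ X ω} *
          prb μ {ω | Y₁ ∩ Y₂ ⊆ X ω} := by linear_combination prb μ {ω | Y₁ ∩ Y₂ ⊆ X ω} * key
      exact mul_right_cancel₀ hv' h'
    · have hv0 : prb μ {ω | Y₁ ∩ Y₂ ⊆ X ω} = 0 :=
        le_antisymm (not_lt.1 hv) (prb_nonneg μ _)
      have ha0 : prb μ {ω | Y₁ ⊆ X ω} = 0 := by
        have h1' : prb μ {ω | Y₁ ⊆ X ω} ≤ prb μ {ω | Y₁ ∩ Y₂ ⊆ X ω} :=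
          prb_mono μ (event_mono Finset.inter_subset_left)
        have h0 := prb_nonneg μ {ω | Y₁ ⊆ X ω}
        linarith [h1'.trans_eq hv0]
      rw [hv0, ha0]; ring
  tfae_finish
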